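/- Let A be a Noetherian ring, I an ideal, and C• a cochain complex of A-modules with differentials d_i such that for each i the I-adic topology of C^i induces the I-adic topology on Ker d_i (i.e., the filtration (I^nC^i ∩ Ker d_i) is I-stable), and the cohomology modules H^i(C•) are finitely generated. Then the natural map H^i(C•)^ → H^i((C•)^) from the I-adic completion of cohomology to the cohomology of the I-adically completed complex is an isomorphism. -/

import Mathlib

open Submodule LinearMap

namespace AdicCohomologyAux

variable {A : Type*} [CommRing A] (I : Ideal A)

theorem map_of' {M N : Type*} [AddCommGroup M] [Module A M] [AddCommGroup N] [Module A N]
    (f : M →ₗ[A] N) (x : M) :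
    AdicCompletion.map I f (AdicCompletion.of I M x) = AdicCompletion.of I N (f x) := by
  ext n
  simp [AdicCompletion.map_val_apply, AdicCompletion.of_apply, Submodule.mkQ_apply]

/-- Universe-polymorphic weak Artin–Rees for finite modules. -/
theorem ar_fin [IsNoetherianRing A] {M : Type*} [AddCommGroup M] [Module A M]
    [Module.Finite A M] (N : Submodule A M) :
    ∃ k : ℕ, ∀ n ≥ k, (I ^ n • ⊤ : Submodule A M) ⊓ N ≤ I ^ (n - k) • N := by
  obtain ⟨t, π, hπ⟩ := Module.Finite.exists_fin' A M
  let e := π.quotKerEquivOfSurjective hπ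
  set N' := Submodule.comap (e.toLinearMap) N with hN'
  obtain ⟨k, hk⟩ := Ideal.exists_pow_inf_eq_pow_smul I N'
  refine ⟨k, fun n hn => ?_⟩
  have htop : Submodule.map e.toLinearMap (⊤ : Submodule A _) = ⊤ := by
    rw [Submodule.map_top, LinearEquiv.range]
  have lhs : Submodule.map e.toLinearMap ((I ^ n • ⊤) ⊓ N') = (I ^ n • ⊤ : Submodule A M) ⊓ N := by
    rw [Submodule.map_inf e.toLinearMap e.injective, Submodule.map_smul'', htop, hN',
      Submodule.map_comap_eq_of_surjective (f := e.toLinearMap) e.surjective N]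
  calc (I ^ n • ⊤ : Submodule A M) ⊓ N = Submodule.map e.toLinearMap ((I ^ n • ⊤) ⊓ N') :=
        lhs.symm
    _ = Submodule.map e.toLinearMap (I ^ (n - k) • (I ^ k • ⊤ ⊓ N')) := by rw [hk n hn]
    _ = I ^ (n - k) • Submodule.map e.toLinearMap (I ^ k • ⊤ ⊓ N') := by
        rw [Submodule.map_smul'']
    _ ≤ I ^ (n - k) • N := by
        refine Submodule.smul_mono le_rfl ?_
        refine le_trans (Submodule.map_mono inf_le_right) ?_
        rw [hN', Submodule.map_comap_eq_of_surjective (f := e.toLinearMap) e.surjective N]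

/-- Artin–Rees style lemma for a submodule with finitely generated quotient. -/
theorem ar_quotient_fg [IsNoetherianRing A] {K : Type*} [AddCommGroup K] [Module A K]
    (B : Submodule A K) (hfg : Module.Finite A (K ⧸ B)) :
    ∃ c : ℕ, ∀ n ≥ c, (I ^ n • ⊤ : Submodule A K) ⊓ B ≤ I ^ (n - c) • B := by
  classical
  obtain ⟨S, hS⟩ := hfg.fg_top
  let sec : (K ⧸ B) → K := Function.surjInv (Submodule.mkQ_surjective B)
  have hsec : ∀ y, B.mkQ (sec y) = y := Function.surjInv_eq _
  set K₀ : Submodule A K := span A (sec '' ↑S) with hK₀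
  have hK₀fg : K₀.FG := Submodule.fg_span ((S.finite_toSet).image sec)
  have hmapK₀ : Submodule.map B.mkQ K₀ = ⊤ := by
    rw [hK₀, Submodule.map_span, Set.image_image]
    simpa [hsec] using hS
  have hsup : B ⊔ K₀ = ⊤ := by
    have := congrArg (Submodule.comap B.mkQ) hmapK₀
    rw [Submodule.comap_map_eq, Submodule.ker_mkQ, Submodule.comap_top] at this
    rw [sup_comm]
    exact this
  haveI : Module.Finite A ↥K₀ := Module.Finite.iff_fg.mpr hK₀fg
  obtain ⟨c, hc⟩ := ar_fin I (M := ↥K₀) (comap K₀.subtype B)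
  have amb : ∀ n ≥ c, (I ^ n • K₀ : Submodule A K) ⊓ B ≤ I ^ (n - c) • B := by
    intro n hn
    have h1 := Submodule.map_mono (f := K₀.subtype) (hc n hn)
    rw [Submodule.map_inf _ (injective_subtype _), Submodule.map_smul'', Submodule.map_top,
      Submodule.range_subtype, Submodule.map_smul'', Submodule.map_comap_subtype] at h1
    intro x hx
    have hx' : x ∈ (I ^ n • K₀ : Submodule A K) ⊓ (K₀ ⊓ B) := by
      refine ⟨hx.1, ⟨?_, hx.2⟩⟩
      exact Submodule.smul_le_right hx.1
    have h2 := h1 hx'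
    exact (Submodule.smul_mono le_rfl inf_le_right) h2
  refine ⟨c, fun n hn x hx => ?_⟩
  have hx1 : x ∈ I ^ n • (B ⊔ K₀) := by rw [hsup]; exact hx.1
  rw [Submodule.smul_sup] at hx1
  obtain ⟨b, hb, k, hk, hbk⟩ := Submodule.mem_sup.mp hx1
  have hkB : k ∈ B := by
    have hxB := hx.2
    have hbB : b ∈ B := Submodule.smul_le_right hb
    have : k = x - b := by rw [← hbk]; abel
    rw [this]; exact Submodule.sub_mem _ hxB hbB
  have hk' : k ∈ I ^ (n - c) • B := amb n hn ⟨hk, hkB⟩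
  have hb' : b ∈ I ^ (n - c) • B :=
    Submodule.smul_mono (Ideal.pow_le_pow_right (by omega)) le_rfl hb
  rw [← hbk]
  exact Submodule.add_mem _ hb' hk'

/-- Ambient version of `ar_quotient_fg`. -/
theorem ar_quotient_fg' [IsNoetherianRing A] {X : Type*} [AddCommGroup X] [Module A X]
    (Kk B : Submodule A X) (hBK : B ≤ Kk)
    (hfg : Module.Finite A (↥Kk ⧸ B.comap Kk.subtype)) :
    ∃ c : ℕ, ∀ n ≥ c, (I ^ n • Kk) ⊓ B ≤ I ^ (n - c) • B := by
  obtain ⟨c, hc⟩ := ar_quotient_fg I (B.comap Kk.subtype) hfg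
  refine ⟨c, fun n hn => ?_⟩
  have h1 := Submodule.map_mono (f := Kk.subtype) (hc n hn)
  rw [Submodule.map_inf _ (injective_subtype _), Submodule.map_smul'', Submodule.map_top,
    Submodule.range_subtype, Submodule.map_comap_subtype, Submodule.map_smul'',
    Submodule.map_comap_subtype] at h1
  intro x hx
  have hx' : x ∈ (I ^ n • Kk) ⊓ (Kk ⊓ B) := ⟨hx.1, Submodule.smul_le_right hx.1, hx.2⟩
  have h2 := h1 hx'
  exact (Submodule.smul_mono le_rfl inf_le_right) h2

theorem exists_preimage_seq {M K : Type*} [AddCommGroup M] [Module A M] [AddCommGroup K]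
    [Module A K] (f : M →ₗ[A] K) (b : ℕ → K) (h0 : ∃ m, f m = b 0)
    (hb : ∀ n, ∃ δ ∈ (I ^ n • ⊤ : Submodule A M), f δ = b (n + 1) - b n) :
    ∃ m : ℕ → M, (∀ n, f (m n) = b n) ∧ ∀ n, m (n + 1) - m n ∈ (I ^ n • ⊤ : Submodule A M) := by
  choose δ hδm hδf using hb
  obtain ⟨m0, hm0⟩ := h0
  refine ⟨fun n => m0 + ∑ j ∈ Finset.range n, δ j, fun n => ?_, fun n => ?_⟩
  · induction n with
    | zero => simpa using hm0
    | succ n ih =>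
      simp only []
      rw [Finset.sum_range_succ, ← add_assoc, map_add, ih, hδf]
      abel
  · have : (m0 + ∑ j ∈ Finset.range (n + 1), δ j) - (m0 + ∑ j ∈ Finset.range n, δ j) = δ n := by
      rw [Finset.sum_range_succ]; abel
    rw [this]
    exact hδm n


variable {M N P P' : Type*} [AddCommGroup M] [Module A M] [AddCommGroup N] [Module A N]
  [AddCommGroup P] [Module A P] [AddCommGroup P'] [Module A P']

set_option maxHeartbeats 2000000 in
theorem aux_iso [IsNoetherianRing A] (f : M →ₗ[A] N) (g : N →ₗ[A] P) (h : P →ₗ[A] P')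
    (hgf : g.comp f = 0) (hhg : h.comp g = 0)
    (hARK : ∃ n₀, ∀ n ≥ n₀, (I ^ n • ⊤ : Submodule A N) ⊓ ker g ≤ I ^ (n - n₀) • ker g)
    (hARK2 : ∃ n₀, ∀ n ≥ n₀, (I ^ n • ⊤ : Submodule A P) ⊓ ker h ≤ I ^ (n - n₀) • ker h)
    (hfgH : Module.Finite A (↥(ker g) ⧸ (range f).comap (ker g).subtype))
    (hfgH2 : Module.Finite A (↥(ker h) ⧸ (range g).comap (ker h).subtype)) :
    ∃ e : AdicCompletion I (↥(ker g) ⧸ (range f).comap (ker g).subtype) ≃ₗ[A]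
        (↥(ker ((AdicCompletion.map I g).restrictScalars A)) ⧸
          (range ((AdicCompletion.map I f).restrictScalars A)).comap
            (ker ((AdicCompletion.map I g).restrictScalars A)).subtype),
      ∀ (x : ker g)
        (hx' : AdicCompletion.of I N x.1 ∈ ker ((AdicCompletion.map I g).restrictScalars A)),
        e (AdicCompletion.of I _ (Submodule.Quotient.mk x)) =
          Submodule.Quotient.mk ⟨AdicCompletion.of I N x.1, hx'⟩ := by
  classical
  obtain ⟨n₀, hn₀⟩ := hARK
  set K := ker g with hKdef
  set Bk := (range f).comap K.subtype with hBkdef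
  have hgf' : ∀ m, g (f m) = 0 := fun m => DFunLike.congr_fun hgf m
  set f' : M →ₗ[A] ↥K := f.codRestrict K (fun m => by
    simp only [hKdef, LinearMap.mem_ker]; exact hgf' m) with hf'def
  have hsubf' : K.subtype.comp f' = f := LinearMap.subtype_comp_codRestrict _ _ _
  set κ : AdicCompletion I ↥K →ₗ[A] AdicCompletion I N :=
    (AdicCompletion.map I K.subtype).restrictScalars A with hκdef
  set π : AdicCompletion I ↥K →ₗ[A] AdicCompletion I (↥K ⧸ Bk) :=
    (AdicCompletion.map I Bk.mkQ).restrictScalars A with hπdef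
  -- pulling membership back along the inclusion
  have hpull : ∀ (n : ℕ) (x : ↥K), (x : N) ∈ I ^ n • K → x ∈ (I ^ n • ⊤ : Submodule A ↥K) := by
    intro n x hx
    have hmap : Submodule.map K.subtype (I ^ n • ⊤ : Submodule A ↥K) = I ^ n • K := by
      rw [Submodule.map_smul'', Submodule.map_top, Submodule.range_subtype]
    rw [← hmap] at hx
    obtain ⟨y, hy, hyx⟩ := hx
    have hyx' : y = x := Subtype.ext hyx
    rwa [← hyx']
  -- κ is injective
  have hκinj : Function.Injective κ := by
    rw [← LinearMap.ker_eq_bot, LinearMap.ker_eq_bot']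
    intro x
    obtain ⟨a, rfl⟩ := AdicCompletion.mk_surjective I _ x
    intro hx
    have ha : ∀ n, ((a n : N)) ∈ (I ^ n • ⊤ : Submodule A N) := by
      intro n
      have h0 : AdicCompletion.map I K.subtype (AdicCompletion.mk I ↥K a) = 0 := hx
      have h1 := congrArg (fun z => z.val n) h0
      simp only [AdicCompletion.map_mk, AdicCompletion.mk_apply_coe,
        AdicCompletion.AdicCauchySequence.map_apply_coe, Submodule.coe_subtype,
        Submodule.mkQ_apply, AdicCompletion.val_zero] at h1
      exact (Submodule.Quotient.mk_eq_zero _).mp h1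
    refine AdicCompletion.mk_zero_of I _ a ⟨0, fun n _ => ⟨n + n₀, by omega, n, by omega, ?_⟩⟩
    refine hpull n _ ?_
    have h2 := hn₀ (n + n₀) (by omega) ⟨ha (n + n₀), (a (n + n₀)).2⟩
    have e1 : n + n₀ - n₀ = n := by omega
    rwa [e1] at h2
  -- range of κ lands in K'
  have hg0 : g.comp K.subtype = 0 := by
    ext x
    exact x.2
  have hκK' : ∀ y, κ y ∈ ker ((AdicCompletion.map I g).restrictScalars A) := by
    intro y
    simp only [LinearMap.mem_ker, LinearMap.restrictScalars_apply]
    show AdicCompletion.map I g (AdicCompletion.map I K.subtype y) = 0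
    rw [AdicCompletion.map_comp_apply, hg0, AdicCompletion.map_zero]
    rfl
  -- main inclusion lemma
  obtain ⟨n₁, hn₁⟩ := hARK2
  have hrg : range g ≤ ker h := LinearMap.range_le_ker_iff.mpr hhg
  obtain ⟨c₁, hc₁⟩ := ar_quotient_fg' I (ker h) (range g) hrg hfgH2
  set c := n₁ + c₁ with hcdef
  have hLmain : ∀ (n : ℕ) (ξ : N), g ξ ∈ (I ^ (n + c) • ⊤ : Submodule A P) →
      ∃ ν ∈ (I ^ n • ⊤ : Submodule A N), ξ - ν ∈ K := by
    intro n ξ hξ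
    have h1 : g ξ ∈ I ^ (n + c₁) • (ker h) := by
      have h2 := hn₁ (n + c) (by omega) ⟨hξ, hrg ⟨ξ, rfl⟩⟩
      have e1 : n + c - n₁ = n + c₁ := by omega
      rwa [e1] at h2
    have h3 : g ξ ∈ I ^ n • (range g) := by
      have h4 := hc₁ (n + c₁) (by omega) ⟨h1, ⟨ξ, rfl⟩⟩
      have e2 : n + c₁ - c₁ = n := by omega
      rwa [e2] at h4
    have h5 : I ^ n • (range g) = Submodule.map g (I ^ n • ⊤ : Submodule A N) := by
      rw [Submodule.map_smul'', Submodule.map_top]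
    rw [h5] at h3
    obtain ⟨ν, hν, hgν⟩ := h3
    refine ⟨ν, hν, ?_⟩
    simp only [hKdef, LinearMap.mem_ker, map_sub, hgν, sub_self]
  -- κ surjects onto K'
  have hκsurjK' : ∀ y, y ∈ ker ((AdicCompletion.map I g).restrictScalars A) → y ∈ range κ := by
    intro y
    obtain ⟨a, rfl⟩ := AdicCompletion.mk_surjective I N y
    intro hker
    have hga : ∀ n, g (a n) ∈ (I ^ n • ⊤ : Submodule A P) := by
      intro n
      have h0 : AdicCompletion.map I g (AdicCompletion.mk I N a) = 0 := hker
      have h1 := congrArg (fun z => z.val n) h0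
      simp only [AdicCompletion.map_mk, AdicCompletion.mk_apply_coe,
        AdicCompletion.AdicCauchySequence.map_apply_coe, Submodule.mkQ_apply,
        AdicCompletion.val_zero] at h1
      exact (Submodule.Quotient.mk_eq_zero _).mp h1
    have hchoice : ∀ n, ∃ ν ∈ (I ^ (n + n₀) • ⊤ : Submodule A N), a (n + n₀ + c) - ν ∈ K :=
      fun n => hLmain (n + n₀) (a (n + n₀ + c)) (hga (n + n₀ + c))
    choose ν hν hkm using hchoice
    have hb : ∀ m, (⟨a (m + n₀ + c) - ν m, hkm m⟩ : ↥K) ≡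
        (⟨a (m + 1 + n₀ + c) - ν (m + 1), hkm (m + 1)⟩ : ↥K)
          [SMOD (I ^ m • ⊤ : Submodule A ↥K)] := by
      intro m
      rw [SModEq.sub_mem]
      refine hpull m _ ?_
      have hd : (((⟨a (m + n₀ + c) - ν m, hkm m⟩ : ↥K) -
          ⟨a (m + 1 + n₀ + c) - ν (m + 1), hkm (m + 1)⟩ : ↥K) : N)
          = ((a (m + n₀ + c) - a (m + 1 + n₀ + c)) - ν m) + ν (m + 1) := by
        simp only [Submodule.coe_sub]
        abel
      have h1 : a (m + n₀ + c) - a (m + 1 + n₀ + c) ∈ (I ^ (m + n₀) • ⊤ : Submodule A N) := by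
        have h2 := a.property (show m + n₀ + c ≤ m + 1 + n₀ + c by omega)
        have h3 := SModEq.sub_mem.mp h2
        exact Submodule.smul_mono (Ideal.pow_le_pow_right (by omega)) le_rfl h3
      have h4 : ((a (m + n₀ + c) - a (m + 1 + n₀ + c)) - ν m) + ν (m + 1) ∈
          (I ^ (m + n₀) • ⊤ : Submodule A N) := by
        refine Submodule.add_mem _ (Submodule.sub_mem _ h1 (hν m)) ?_
        exact Submodule.smul_mono (Ideal.pow_le_pow_right (by omega)) le_rfl (hν (m + 1))
      have h5 := hn₀ (m + n₀) (by omega) ⟨by rw [hd]; exact h4, SetLike.coe_mem _⟩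
      rwa [Nat.add_sub_cancel] at h5
    refine ⟨AdicCompletion.mk I ↥K
      (AdicCompletion.AdicCauchySequence.mk I ↥K
        (fun m => ⟨a (m + n₀ + c) - ν m, hkm m⟩) hb), ?_⟩
    show AdicCompletion.map I K.subtype _ = AdicCompletion.mk I N a
    rw [AdicCompletion.map_mk]
    apply AdicCompletion.ext
    intro n
    rw [AdicCompletion.mk_apply_coe, AdicCompletion.mk_apply_coe]
    simp only [AdicCompletion.AdicCauchySequence.map_apply_coe, Submodule.coe_subtype]
    rw [Submodule.mkQ_apply, Submodule.mkQ_apply, Submodule.Quotient.eq]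
    show ((a (n + n₀ + c) : N) - ν n) - (a n : N) ∈ (I ^ n • ⊤ : Submodule A N)
    have h1 : a (n + n₀ + c) - a n ∈ (I ^ n • ⊤ : Submodule A N) := by
      have h2 := a.property (show n ≤ n + n₀ + c by omega)
      have h3 := SModEq.sub_mem.mp h2
      have h4 := Submodule.neg_mem _ h3
      simpa using h4
    have h5 : (a (n + n₀ + c) - ν n) - a n = (a (n + n₀ + c) - a n) - ν n := by abel
    rw [h5]
    refine Submodule.sub_mem _ h1 ?_
    exact Submodule.smul_mono (Ideal.pow_le_pow_right (by omega)) le_rfl (hν n)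
  -- π is surjective
  have hπsurj : Function.Surjective π := fun y =>
    AdicCompletion.map_surjective I (Submodule.mkQ_surjective Bk) y
  -- range f' = Bk
  have hf'Bk : range f' = Bk := by
    ext x
    simp only [LinearMap.mem_range, hBkdef, Submodule.mem_comap, Submodule.coe_subtype,
      hf'def, Subtype.ext_iff, LinearMap.codRestrict_apply]
  have hmkQf' : Bk.mkQ.comp f' = 0 := by
    ext m
    simp only [LinearMap.coe_comp, Function.comp_apply, Submodule.mkQ_apply,
      LinearMap.zero_apply, Submodule.Quotient.mk_eq_zero]
    rw [← hf'Bk]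
    exact ⟨m, rfl⟩
  have hsub1 : ∀ w, π ((AdicCompletion.map I f').restrictScalars A w) = 0 := by
    intro w
    show AdicCompletion.map I Bk.mkQ (AdicCompletion.map I f' w) = 0
    rw [AdicCompletion.map_comp_apply, hmkQf', AdicCompletion.map_zero]
    rfl
  have hsub2 : ∀ y, π y = 0 → y ∈ range ((AdicCompletion.map I f').restrictScalars A) := by
    intro y
    obtain ⟨a, rfl⟩ := AdicCompletion.mk_surjective I _ y
    intro hy
    obtain ⟨c₂, hc₂⟩ := ar_quotient_fg I Bk hfgH
    have ha : ∀ n, a n ∈ Bk ⊔ (I ^ n • ⊤ : Submodule A ↥K) := by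
      intro n
      have h0 : AdicCompletion.map I Bk.mkQ (AdicCompletion.mk I ↥K a) = 0 := hy
      have h1 := congrArg (fun z => z.val n) h0
      simp only [AdicCompletion.map_mk, AdicCompletion.mk_apply_coe,
        AdicCompletion.AdicCauchySequence.map_apply_coe, Submodule.mkQ_apply,
        AdicCompletion.val_zero] at h1
      have h2 : Bk.mkQ (a n) ∈ (I ^ n • ⊤ : Submodule A (↥K ⧸ Bk)) :=
        (Submodule.Quotient.mk_eq_zero _).mp h1
      have h3 : (I ^ n • ⊤ : Submodule A (↥K ⧸ Bk)) = Submodule.map Bk.mkQ (I ^ n • ⊤) := by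
        rw [Submodule.map_smul'', Submodule.map_top, Submodule.range_mkQ]
      rw [h3] at h2
      have h4 : a n ∈ Submodule.comap Bk.mkQ (Submodule.map Bk.mkQ (I ^ n • ⊤)) := h2
      rw [Submodule.comap_map_mkQ] at h4
      exact h4
    choose bb hbb kk hkk hsum using fun n => Submodule.mem_sup.mp (ha n)
    have hdiff : ∀ n, bb (n + 1 + c₂) - bb (n + c₂) ∈ I ^ n • Bk := by
      intro n
      have e1 : bb (n + 1 + c₂) = a (n + 1 + c₂) - kk (n + 1 + c₂) := by
        rw [← hsum (n + 1 + c₂)]; abel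
      have e2 : bb (n + c₂) = a (n + c₂) - kk (n + c₂) := by
        rw [← hsum (n + c₂)]; abel
      have h1 : bb (n + 1 + c₂) - bb (n + c₂) =
          ((a (n + 1 + c₂) - a (n + c₂)) - kk (n + 1 + c₂)) + kk (n + c₂) := by
        rw [e1, e2]; abel
      have h2 : bb (n + 1 + c₂) - bb (n + c₂) ∈ (I ^ (n + c₂) • ⊤ : Submodule A ↥K) := by
        rw [h1]
        refine Submodule.add_mem _ (Submodule.sub_mem _ ?_ ?_) ?_
        · have h3 := a.property (show n + c₂ ≤ n + 1 + c₂ by omega)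
          have h4 := SModEq.sub_mem.mp h3
          have h5 := Submodule.neg_mem _ h4
          simpa using h5
        · exact Submodule.smul_mono (Ideal.pow_le_pow_right (by omega)) le_rfl (hkk (n + 1 + c₂))
        · exact hkk (n + c₂)
      have h6 := hc₂ (n + c₂) (by omega) ⟨h2, Submodule.sub_mem _ (hbb _) (hbb _)⟩
      rwa [Nat.add_sub_cancel] at h6
    have h0' : ∃ m, f' m = bb (0 + c₂) := by
      have h1 := hbb (0 + c₂)
      rw [← hf'Bk] at h1
      exact h1
    have hδ' : ∀ n, ∃ δ ∈ (I ^ n • ⊤ : Submodule A M), f' δ = bb (n + 1 + c₂) - bb (n + c₂) := by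
      intro n
      have h1 := hdiff n
      rw [← hf'Bk] at h1
      have h2 : I ^ n • range f' = Submodule.map f' (I ^ n • ⊤ : Submodule A M) := by
        rw [Submodule.map_smul'', Submodule.map_top]
      rw [h2] at h1
      obtain ⟨δ, hδ, hfδ⟩ := h1
      exact ⟨δ, hδ, hfδ⟩
    obtain ⟨ms, hmf, hmc⟩ := exists_preimage_seq I f' (fun n => bb (n + c₂)) h0' hδ'
    have hmcauchy : ∀ n, ms n ≡ ms (n + 1) [SMOD (I ^ n • ⊤ : Submodule A M)] := by
      intro n
      rw [SModEq.sub_mem]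
      have h1 := Submodule.neg_mem _ (hmc n)
      simpa using h1
    refine ⟨AdicCompletion.mk I M (AdicCompletion.AdicCauchySequence.mk I M ms hmcauchy), ?_⟩
    show AdicCompletion.map I f' _ = AdicCompletion.mk I ↥K a
    rw [AdicCompletion.map_mk]
    apply AdicCompletion.ext
    intro n
    rw [AdicCompletion.mk_apply_coe, AdicCompletion.mk_apply_coe]
    simp only [AdicCompletion.AdicCauchySequence.map_apply_coe]
    rw [Submodule.mkQ_apply, Submodule.mkQ_apply]
    show Submodule.Quotient.mk (f' (ms n)) = Submodule.Quotient.mk (a n)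
    rw [hmf n, Submodule.Quotient.eq]
    have e2 : bb (n + c₂) = a (n + c₂) - kk (n + c₂) := by
      rw [← hsum (n + c₂)]; abel
    have h1 : bb (n + c₂) - a n = (a (n + c₂) - a n) - kk (n + c₂) := by
      rw [e2]; abel
    rw [h1]
    refine Submodule.sub_mem _ ?_ ?_
    · have h3 := a.property (show n ≤ n + c₂ by omega)
      have h4 := SModEq.sub_mem.mp h3
      have h5 := Submodule.neg_mem _ h4
      simpa using h5
    · exact Submodule.smul_mono (Ideal.pow_le_pow_right (by omega)) le_rfl (hkk (n + c₂))
  -- assembly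
  set K' := ker ((AdicCompletion.map I g).restrictScalars A) with hK'def
  set B' := (range ((AdicCompletion.map I f).restrictScalars A)).comap K'.subtype with hB'def
  set eKlin : AdicCompletion I ↥K →ₗ[A] ↥K' := κ.codRestrict K' hκK' with heKlindef
  have heKinj : Function.Injective eKlin := by
    intro x y hxy
    apply hκinj
    have h1 := congrArg Subtype.val hxy
    simpa [heKlindef, LinearMap.codRestrict_apply] using h1
  have heKsurj : Function.Surjective eKlin := by
    intro z
    obtain ⟨y, hy⟩ := hκsurjK' z.1 z.2
    exact ⟨y, Subtype.ext (by simpa [heKlindef] using hy)⟩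
  set eK : AdicCompletion I ↥K ≃ₗ[A] ↥K' := LinearEquiv.ofBijective eKlin ⟨heKinj, heKsurj⟩
    with heKdef
  have hκf' : ∀ w, κ ((AdicCompletion.map I f').restrictScalars A w) =
      (AdicCompletion.map I f).restrictScalars A w := by
    intro w
    show AdicCompletion.map I K.subtype (AdicCompletion.map I f' w) = AdicCompletion.map I f w
    rw [AdicCompletion.map_comp_apply, hsubf']
  have hmapeq : (ker π).map (eK : AdicCompletion I ↥K →ₗ[A] ↥K') = B' := by
    ext z
    constructor
    · rintro ⟨y, hyker, rfl⟩
      obtain ⟨w, rfl⟩ := hsub2 y (LinearMap.mem_ker.mp hyker)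
      simp only [hB'def, Submodule.mem_comap, Submodule.coe_subtype]
      refine ⟨w, ?_⟩
      exact (hκf' w).symm
    · intro hz
      simp only [hB'def, Submodule.mem_comap, Submodule.coe_subtype] at hz
      obtain ⟨w, hw⟩ := hz
      refine ⟨(AdicCompletion.map I f').restrictScalars A w,
        LinearMap.mem_ker.mpr (hsub1 w), ?_⟩
      apply Subtype.ext
      show κ _ = (z : AdicCompletion I N)
      rw [hκf' w]
      exact hw
  set eπ := π.quotKerEquivOfSurjective hπsurj with heπdef
  refine ⟨eπ.symm.trans (Submodule.Quotient.equiv (ker π) B' eK hmapeq), ?_⟩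
  intro x hx'
  have h1 : AdicCompletion.of I (↥K ⧸ Bk) (Submodule.Quotient.mk x) =
      π (AdicCompletion.of I ↥K x) := by
    show _ = AdicCompletion.map I Bk.mkQ (AdicCompletion.of I ↥K x)
    rw [map_of']
    rfl
  have h2 : eπ.symm (π (AdicCompletion.of I ↥K x)) =
      Submodule.Quotient.mk (AdicCompletion.of I ↥K x) := by
    rw [LinearEquiv.symm_apply_eq]
    rfl
  have h3 : (Submodule.Quotient.equiv (ker π) B' eK hmapeq)
      (Submodule.Quotient.mk (AdicCompletion.of I ↥K x)) =
      Submodule.Quotient.mk (eK (AdicCompletion.of I ↥K x)) := by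
    rfl
  have h4 : eK (AdicCompletion.of I ↥K x) = ⟨AdicCompletion.of I N x.1, hx'⟩ := by
    apply Subtype.ext
    show κ (AdicCompletion.of I ↥K x) = AdicCompletion.of I N x.1
    show AdicCompletion.map I K.subtype (AdicCompletion.of I ↥K x) = _
    rw [map_of']
    rfl
  rw [LinearEquiv.trans_apply, h1, h2, h3, h4]


end AdicCohomologyAux

variable {A : Type*} [CommRing A]

/-- Let `A` be a Noetherian ring, `I` an ideal, and `C•` a cochain complex of `A`-modules
(with differentials `d i : C i → C (i+1)`, `d ∘ d = 0`) such that for each `i` the `I`-adic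
topology of `C (i+1)` induces the `I`-adic topology on `Ker (d (i+1))` (the filtration
`I^n C^{i+1} ⊓ Ker d_{i+1}` is `I`-stable) and the cohomology `H^{i+1}(C•) = Ker d_{i+1} / Im d_i`
is a finitely generated `A`-module.  Then the natural map
`H^{i+1}(C•)^ → H^{i+1}((C•)^)` from the `I`-adic completion of cohomology to the cohomology of
the `I`-adically completed complex is an isomorphism: there is a linear isomorphism compatible
with the canonical maps from `H^{i+1}(C•)`. -/
theorem adicCompletion_cohomology_iso [IsNoetherianRing A] (I : Ideal A)
    (C : ℕ → Type*) [∀ i, AddCommGroup (C i)] [∀ i, Module A (C i)]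
    (d : ∀ i, C i →ₗ[A] C (i + 1))
    (hcx : ∀ i, (d (i + 1)).comp (d i) = 0)
    (hAR : ∀ i, ∃ n₀, ∀ n ≥ n₀,
      (I ^ n • ⊤ : Submodule A (C (i + 1))) ⊓ LinearMap.ker (d (i + 1)) ≤
        I ^ (n - n₀) • LinearMap.ker (d (i + 1)))
    (hfg : ∀ i, Module.Finite A
      ((LinearMap.ker (d (i + 1))) ⧸
        ((LinearMap.range (d i)).comap (LinearMap.ker (d (i + 1))).subtype)))
    (i : ℕ) :
    ∃ e : AdicCompletion I
        ((LinearMap.ker (d (i + 1))) ⧸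
          ((LinearMap.range (d i)).comap (LinearMap.ker (d (i + 1))).subtype)) ≃ₗ[A]
        ((LinearMap.ker ((AdicCompletion.map I (d (i + 1))).restrictScalars A)) ⧸
          ((LinearMap.range ((AdicCompletion.map I (d i)).restrictScalars A)).comap
            (LinearMap.ker ((AdicCompletion.map I (d (i + 1))).restrictScalars A)).subtype)),
      -- compatibility with the canonical maps from `H^{i+1}(C•)`, i.e. `e` is the natural map
      ∀ x : LinearMap.ker (d (i + 1)),
        e (AdicCompletion.of I _ (Submodule.Quotient.mk x)) =
          Submodule.Quotient.mk
            ⟨AdicCompletion.of I (C (i + 1)) x.1, by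
              have hx : d (i + 1) x.1 = 0 := x.2
              simp only [LinearMap.mem_ker, LinearMap.restrictScalars_apply]
              ext n
              simp [hx]⟩ := by
  obtain ⟨e, he⟩ := AdicCohomologyAux.aux_iso I (d i) (d (i + 1)) (d (i + 2)) (hcx i)
    (hcx (i + 1)) (hAR i) (hAR (i + 1)) (hfg i) (hfg (i + 1))
  exact ⟨e, fun x => he x _⟩
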